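/- Let q be real with 0 < q < 1, h ≥ 1 an integer, w a complex number with |w| = 1, and χ a Dirichlet character modulo a positive integer f. Then for every s ∈ ℂ the series defining the twisted q-l-function l^{(h,1)}_{q,w}(s,χ) := (1+q) · Σ_{k=1}^∞ χ(k) (-1)^k q^{hk} w^k exp(-s · log [k]_q) converges absolutely, and the function s ↦ l^{(h,1)}_{q,w}(s,χ) is complex-differentiable (hence analytic) on all of ℂ. -/

import Mathlib

/-- The q-number `[t]_q = (1 - q^t)/(1 - q)` with real power `q ^ t`. -/
noncomputable def qNum (q t : ℝ) : ℝ := (1 - q ^ t) / (1 - q)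

/-- The twisted q-l-function attached to a Dirichlet character `χ` modulo `f`:
`l^{(h,1)}_{q,w}(s, χ) = (1+q) · Σ_{k≥1} χ(k) (-1)^k q^{hk} w^k exp(-s · log [k]_q)`. -/
noncomputable def twL (q : ℝ) (h : ℤ) (w : ℂ) {f : ℕ} (χ : DirichletCharacter ℂ f)
    (s : ℂ) : ℂ :=
  ((1 + q : ℝ) : ℂ) * ∑' k : ℕ,
    χ ((k + 1 : ℕ) : ZMod f) * (-1 : ℂ) ^ (k + 1) * (q : ℂ) ^ (h * (k + 1) : ℤ) *
      w ^ (k + 1) * Complex.exp (-s * (Real.log (qNum q ((k : ℝ) + 1)) : ℂ))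

lemma qNum_bounds (q : ℝ) (hq0 : 0 < q) (hq1 : q < 1) (t : ℝ) (ht : 1 ≤ t) :
    1 ≤ qNum q t ∧ qNum q t ≤ 1 / (1 - q) := by
  have hq' : 0 < 1 - q := by linarith
  have hqt1 : q ^ t ≤ q := by
    have := Real.rpow_le_rpow_of_exponent_ge hq0 hq1.le ht
    simpa using this
  have hqt0 : 0 < q ^ t := Real.rpow_pos_of_pos hq0 t
  constructor
  · rw [qNum, le_div_iff₀ hq']
    linarith
  · rw [qNum, div_le_div_iff₀ hq' hq']
    nlinarith

lemma term_bound (q : ℝ) (hq0 : 0 < q) (hq1 : q < 1) (h : ℤ) (hh : 1 ≤ h)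
    (w : ℂ) (hw : ‖w‖ = 1) (f : ℕ) (χ : DirichletCharacter ℂ f)
    (R : ℝ) (s : ℂ) (hs : ‖s‖ ≤ R) (k : ℕ) :
    ‖χ ((k + 1 : ℕ) : ZMod f) * (-1 : ℂ) ^ (k + 1) * (q : ℂ) ^ (h * (k + 1) : ℤ) *
      w ^ (k + 1) * Complex.exp (-s * (Real.log (qNum q ((k : ℝ) + 1)) : ℂ))‖
      ≤ Real.exp (R * Real.log (1 / (1 - q))) * q ^ (k + 1) := by
  have hq' : 0 < 1 - q := by linarith
  have hR0 : 0 ≤ R := le_trans (norm_nonneg s) hs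
  set t : ℝ := (k : ℝ) + 1 with htdef
  have ht : 1 ≤ t := by simp [htdef]
  obtain ⟨hN1, hN2⟩ := qNum_bounds q hq0 hq1 t ht
  set r := Real.log (qNum q t) with hrdef
  have hr0 : 0 ≤ r := Real.log_nonneg hN1
  have hL0 : 0 ≤ Real.log (1 / (1 - q)) := le_trans hr0 (Real.log_le_log (by linarith) hN2)
  have hrL : r ≤ Real.log (1 / (1 - q)) := Real.log_le_log (by linarith) hN2
  have h1 : ‖χ ((k + 1 : ℕ) : ZMod f)‖ ≤ 1 := DirichletCharacter.norm_le_one χ _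
  have h2 : ‖(q : ℂ) ^ (h * (k + 1) : ℤ)‖ ≤ q ^ (k + 1) := by
    rw [norm_zpow, Complex.norm_real, Real.norm_of_nonneg hq0.le]
    calc q ^ (h * (k + 1) : ℤ) ≤ q ^ ((k + 1 : ℕ) : ℤ) := by
          apply zpow_le_zpow_right_of_le_one₀ hq0 hq1.le
          have : (1 : ℤ) * (k + 1) ≤ h * (k + 1) := by
            apply mul_le_mul_of_nonneg_right hh (by positivity)
          simpa using this
      _ = q ^ (k + 1) := by rw [zpow_natCast]
  have h3 : ‖Complex.exp (-s * (r : ℂ))‖ ≤ Real.exp (R * Real.log (1 / (1 - q))) := by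
    rw [Complex.norm_exp]
    apply Real.exp_le_exp.mpr
    have hre : (-s * (r : ℂ)).re = -s.re * r := by simp [Complex.mul_re]
    rw [hre]
    calc -s.re * r ≤ |s.re| * r := by
          apply mul_le_mul_of_nonneg_right _ hr0
          exact neg_le_abs s.re
      _ ≤ R * Real.log (1 / (1 - q)) := by
          apply mul_le_mul (le_trans (Complex.abs_re_le_norm s) hs) hrL hr0 hR0
  calc ‖χ ((k + 1 : ℕ) : ZMod f) * (-1 : ℂ) ^ (k + 1) * (q : ℂ) ^ (h * (k + 1) : ℤ) *
      w ^ (k + 1) * Complex.exp (-s * (r : ℂ))‖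
      = ‖χ ((k + 1 : ℕ) : ZMod f)‖ * ‖(-1 : ℂ) ^ (k + 1)‖ * ‖(q : ℂ) ^ (h * (k + 1) : ℤ)‖ *
        ‖w ^ (k + 1)‖ * ‖Complex.exp (-s * (r : ℂ))‖ := by simp [norm_mul]
    _ ≤ 1 * 1 * q ^ (k + 1) * 1 * Real.exp (R * Real.log (1 / (1 - q))) := by
        apply mul_le_mul _ h3 (norm_nonneg _) (by positivity)
        apply mul_le_mul _ (by simp [norm_pow, hw]) (norm_nonneg _) (by positivity)
        apply mul_le_mul _ h2 (norm_nonneg _) (by positivity)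
        apply mul_le_mul h1 (by simp) (norm_nonneg _) zero_le_one
    _ = Real.exp (R * Real.log (1 / (1 - q))) * q ^ (k + 1) := by ring

lemma geom_aux (q : ℝ) (hq0 : 0 < q) (hq1 : q < 1) (C : ℝ) :
    Summable (fun k : ℕ => C * q ^ (k + 1)) := by
  have : Summable (fun k : ℕ => (C * q) * q ^ k) :=
    (summable_geometric_of_lt_one hq0.le hq1).mul_left _
  exact this.congr fun k => by ring

/-- For `0 < q < 1`, integer `h ≥ 1`, `|w| = 1` and a Dirichlet character `χ` modulo a
positive integer `f`, the series defining the twisted q-l-function converges absolutely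
for every `s ∈ ℂ`, and `s ↦ l^{(h,1)}_{q,w}(s, χ)` is entire. -/
theorem stmt6 (q : ℝ) (hq0 : 0 < q) (hq1 : q < 1) (h : ℤ) (hh : 1 ≤ h)
    (w : ℂ) (hw : ‖w‖ = 1) (f : ℕ) (hf0 : 0 < f) (χ : DirichletCharacter ℂ f) :
    (∀ s : ℂ, Summable (fun k : ℕ =>
      ‖χ ((k + 1 : ℕ) : ZMod f) * (-1 : ℂ) ^ (k + 1) * (q : ℂ) ^ (h * (k + 1) : ℤ) *
        w ^ (k + 1) * Complex.exp (-s * (Real.log (qNum q ((k : ℝ) + 1)) : ℂ))‖)) ∧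
    Differentiable ℂ (fun s : ℂ => twL q h w χ s) := by
  constructor
  · intro s
    apply Summable.of_nonneg_of_le (fun k => norm_nonneg _)
      (fun k => term_bound q hq0 hq1 h hh w hw f χ ‖s‖ s le_rfl k)
      (geom_aux q hq0 hq1 _)
  · have key : Differentiable ℂ (fun s : ℂ => ∑' k : ℕ,
        χ ((k + 1 : ℕ) : ZMod f) * (-1 : ℂ) ^ (k + 1) * (q : ℂ) ^ (h * (k + 1) : ℤ) *
          w ^ (k + 1) * Complex.exp (-s * (Real.log (qNum q ((k : ℝ) + 1)) : ℂ))) := by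
      intro s₀
      have hdiff : DifferentiableOn ℂ (fun s : ℂ => ∑' k : ℕ,
          χ ((k + 1 : ℕ) : ZMod f) * (-1 : ℂ) ^ (k + 1) * (q : ℂ) ^ (h * (k + 1) : ℤ) *
            w ^ (k + 1) * Complex.exp (-s * (Real.log (qNum q ((k : ℝ) + 1)) : ℂ)))
          (Metric.ball s₀ 1) := by
        apply Complex.differentiableOn_tsum_of_summable_norm
          (geom_aux q hq0 hq1 (Real.exp ((‖s₀‖ + 1) * Real.log (1 / (1 - q)))))
        · intro k
          apply Differentiable.differentiableOn
          apply Differentiable.mul (differentiable_const _)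
          exact Complex.differentiable_exp.comp ((differentiable_id.neg).mul_const _)
        · exact Metric.isOpen_ball
        · intro k z hz
          apply term_bound q hq0 hq1 h hh w hw f χ (‖s₀‖ + 1) z _ k
          have := mem_ball_iff_norm.mp hz
          calc ‖z‖ = ‖s₀ + (z - s₀)‖ := by ring_nf
            _ ≤ ‖s₀‖ + ‖z - s₀‖ := norm_add_le _ _
            _ ≤ ‖s₀‖ + 1 := by linarith
      exact hdiff.differentiableAt (Metric.isOpen_ball.mem_nhds (Metric.mem_ball_self one_pos))
    exact (differentiable_const _).mul key
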